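/- arXiv:2202.05717 — 4 statements merged into one kernel-verified Lean document; each statement's English description precedes it below -/
import Mathlib

section
/- For 2×2 trace-zero matrices A and B over ℂ, det(AB - BA) = 4·det(A)·det(B) - Tr(AB)². -/
theorem stmt_1 (A B : Matrix (Fin 2) (Fin 2) ℂ) (hA : A.trace = 0) (hB : B.trace = 0) :
    (A * B - B * A).det = 4 * A.det * B.det - ((A * B).trace) ^ 2 := by
  simp only [Matrix.trace_fin_two, Matrix.det_fin_two, Matrix.sub_apply, Matrix.mul_apply,
    Fin.sum_univ_two] at *
  have h : A 1 1 = -A 0 0 := by linear_combination hA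
  have h2 : B 1 1 = -B 0 0 := by linear_combination hB
  ring_nf
  rw [h, h2]
  ring
end

section
/- Let G be a group acting on a polynomial ring k[V] by degree-preserving algebra automorphisms, where k is an infinite field. If f₁, f₂ ∈ k[V] are coprime and the rational function f₁/f₂ is G-invariant, then for each g ∈ G there is a scalar λ_g ∈ k with g·f₁ = λ_g f₁ and g·f₂ = λ_g f₂, and g ↦ λ_g is a group homomorphism G → k*. -/
open MvPolynomial

lemma eq_C_of_totalDegree_eq_zero' {k : Type*} [CommSemiring k] {V : Type*}
    {p : MvPolynomial V k} (h : p.totalDegree = 0) : p = C (p.coeff 0) := by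
  classical
  rw [totalDegree_eq_zero_iff] at h
  ext m
  rw [coeff_C]
  split_ifs with hm
  · subst hm; rfl
  · by_contra hc
    have hm0 : m = 0 := by
      ext x
      exact h m (by simpa [mem_support_iff] using hc) x
    exact hm hm0.symm

lemma isUnit_eq_C' {k : Type*} [Field k] {V : Type*}
    {d : MvPolynomial V k} (h : IsUnit d) : ∃ c : kˣ, d = C (c : k) := by
  classical
  letI : LinearOrder V := IsWellOrder.linearOrder WellOrderingRel
  obtain ⟨u, rfl⟩ := h
  have hd0 : (u : MvPolynomial V k) ≠ 0 := u.ne_zero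
  have he0 : ((u⁻¹ : _) : MvPolynomial V k) ≠ 0 := u⁻¹.ne_zero
  have hde : (u : MvPolynomial V k) * (u⁻¹ : _) = 1 := u.mul_inv
  have hD : Function.Injective (toLex : (V →₀ ℕ) → Lex (V →₀ ℕ)) := fun _ _ h => h
  have hadd : ∀ a b : (V →₀ ℕ), toLex (a + b) = toLex a + toLex b := fun _ _ => rfl
  have hmul := AddMonoidAlgebra.supDegree_mul (D := (toLex : (V →₀ ℕ) → Lex (V →₀ ℕ)))
    hD hadd
    (mul_ne_zero ((AddMonoidAlgebra.leadingCoeff_ne_zero hD).2 hd0)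
      ((AddMonoidAlgebra.leadingCoeff_ne_zero hD).2 he0)) hd0 he0
  rw [hde] at hmul
  have hone : AddMonoidAlgebra.supDegree (toLex : (V →₀ ℕ) → Lex (V →₀ ℕ))
      (1 : MvPolynomial V k) = toLex 0 := by
    have : (1 : MvPolynomial V k) = AddMonoidAlgebra.single 0 1 := rfl
    rw [this]
    exact AddMonoidAlgebra.supDegree_single_ne_zero _ one_ne_zero
  have hzero : AddMonoidAlgebra.supDegree (toLex : (V →₀ ℕ) → Lex (V →₀ ℕ))
      (u : MvPolynomial V k) = (0 : Lex (V →₀ ℕ)) := by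
    have hsum : AddMonoidAlgebra.supDegree (toLex : (V →₀ ℕ) → Lex (V →₀ ℕ))
        (u : MvPolynomial V k)
        + AddMonoidAlgebra.supDegree (toLex : (V →₀ ℕ) → Lex (V →₀ ℕ))
        ((u⁻¹ : _) : MvPolynomial V k) = 0 := by
      rw [← hmul, hone]; rfl
    have hb1 : (0 : Lex (V →₀ ℕ)) ≤ _ := bot_le (a := AddMonoidAlgebra.supDegree
        (toLex : (V →₀ ℕ) → Lex (V →₀ ℕ)) (u : MvPolynomial V k))
    have hb2 : (0 : Lex (V →₀ ℕ)) ≤ _ := bot_le (a := AddMonoidAlgebra.supDegree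
        (toLex : (V →₀ ℕ) → Lex (V →₀ ℕ)) ((u⁻¹ : _) : MvPolynomial V k))
    have hle := le_add_of_nonneg_right (a := AddMonoidAlgebra.supDegree
        (toLex : (V →₀ ℕ) → Lex (V →₀ ℕ)) (u : MvPolynomial V k)) hb2
    rw [hsum] at hle
    exact le_antisymm hle hb1
  have htd : (u : MvPolynomial V k).totalDegree = 0 := by
    rw [totalDegree_eq_zero_iff]
    intro m hm x
    have h1 : toLex m ≤ (0 : Lex (V →₀ ℕ)) := hzero ▸ Finset.le_sup hm
    have h2 : (0 : Lex (V →₀ ℕ)) ≤ toLex m := bot_le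
    have : toLex m = (0 : Lex (V →₀ ℕ)) := le_antisymm h1 h2
    have : m = 0 := hD this
    simp [this]
  have hC := eq_C_of_totalDegree_eq_zero' htd
  have hne : (u : MvPolynomial V k).coeff 0 ≠ 0 := by
    intro hc
    rw [hc, map_zero] at hC
    exact hd0 hC
  exact ⟨Units.mk0 _ hne, hC⟩

theorem stmt_8 {k : Type*} [Field k] [Infinite k] {V : Type*} {G : Type*} [Group G]
    (φ : G →* (MvPolynomial V k ≃ₐ[k] MvPolynomial V k))
    (hdeg : ∀ (g : G) (p : MvPolynomial V k), (φ g p).totalDegree = p.totalDegree)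
    (f₁ f₂ : MvPolynomial V k) (hf₂ : f₂ ≠ 0)
    (hcop : IsRelPrime f₁ f₂)
    (hinv : ∀ g : G, φ g f₁ * f₂ = f₁ * φ g f₂) :
    ∃ lam : G →* kˣ, ∀ g : G, φ g f₁ = (lam g : k) • f₁ ∧ φ g f₂ = (lam g : k) • f₂ := by
  -- for each g, f₂ divides φ g f₂
  have hdvd : ∀ g : G, f₂ ∣ φ g f₂ := by
    intro g
    exact hcop.symm.dvd_of_dvd_mul_left ⟨φ g f₁, (hinv g).symm.trans (mul_comm _ _)⟩
  -- f₂ and φ g f₂ are associated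
  have key : ∀ g : G, ∃ c : kˣ, φ g f₁ = (c : k) • f₁ ∧ φ g f₂ = (c : k) • f₂ := by
    intro g
    have h1 : f₂ ∣ φ g f₂ := hdvd g
    have h2 : φ g f₂ ∣ f₂ := by
      obtain ⟨e, he⟩ := hdvd g⁻¹
      refine ⟨φ g e, ?_⟩
      have h3 := congrArg (φ g) he
      rw [map_mul] at h3
      have h4 : φ g (φ g⁻¹ f₂) = f₂ := by
        rw [← AlgEquiv.mul_apply, ← map_mul, mul_inv_cancel, map_one, AlgEquiv.one_apply]
      rwa [h4] at h3
    obtain ⟨u, hu⟩ := (associated_of_dvd_dvd h1 h2)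
    obtain ⟨c, hc⟩ := isUnit_eq_C' u.isUnit
    have hgf₂ : φ g f₂ = (c : k) • f₂ := by
      rw [smul_eq_C_mul, ← hc, mul_comm, hu]
    refine ⟨c, ?_, hgf₂⟩
    have hcancel : φ g f₁ * f₂ = ((c : k) • f₁) * f₂ := by
      rw [hinv g, hgf₂, smul_mul_assoc, mul_smul_comm, mul_comm]
    exact mul_right_cancel₀ hf₂ hcancel
  choose lam h1 h2 using key
  have uniq : ∀ g (u : kˣ), φ g f₂ = (u : k) • f₂ → u = lam g := by
    intro g u hu
    have heq : (u : k) • f₂ = (lam g : k) • f₂ := hu ▸ h2 g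
    have hcoef : (u : k) = (lam g : k) := by
      by_contra hne
      have h0 : ((u : k) - (lam g : k)) • f₂ = 0 := by
        rw [sub_smul, heq, sub_self]
      rcases smul_eq_zero.mp h0 with h | h
      · exact hne (sub_eq_zero.mp h)
      · exact hf₂ h
    exact Units.ext hcoef
  refine ⟨{ toFun := lam, map_one' := ?_, map_mul' := ?_ }, fun g => ⟨h1 g, h2 g⟩⟩
  · exact (uniq 1 1 (by simp)).symm
  · intro g h
    refine (uniq (g * h) (lam g * lam h) ?_).symm
    rw [map_mul, AlgEquiv.mul_apply, h2 h, map_smul, h2 g,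
      Units.val_mul, mul_smul, smul_comm]
end

section
/- If a group G acting on k[V] by algebra automorphisms admits no nontrivial group homomorphism G → k*, then the field of G-invariant rational functions k(V)^G equals the fraction field of the invariant ring k[V]^G. -/
open MvPolynomial

private lemma mv_unit_eq_C_fin {k : Type*} [Field k] :
    ∀ (n : ℕ) (p : MvPolynomial (Fin n) k), IsUnit p → ∃ c : k, c ≠ 0 ∧ p = C c := by
  intro n
  induction n with
  | zero =>
    intro p hp
    refine ⟨p.coeff 0, ?_, eq_C_of_isEmpty p⟩
    intro h0
    have h := hp.ne_zero
    rw [eq_C_of_isEmpty p, h0, map_zero] at h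
    exact h rfl
  | succ n ih =>
    intro p hp
    have h2 : IsUnit (finSuccEquiv k n p) := hp.map (finSuccEquiv k n)
    obtain ⟨r, hr, hCr⟩ := Polynomial.isUnit_iff.mp h2
    obtain ⟨c, hc, rfl⟩ := ih r hr
    refine ⟨c, hc, (finSuccEquiv k n).injective ?_⟩
    rw [← hCr]
    have := congrArg (fun (f : k →+* MvPolynomial (Fin (n+1)) k) => f c)
      (finSuccEquiv_comp_C_eq_C (R := k) n)
    simp only [RingHom.comp_apply] at this
    rw [← this]
    simp

private lemma mv_unit_eq_C {k : Type*} [Field k] {V : Type*}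
    {p : MvPolynomial V k} (hp : IsUnit p) : ∃ c : k, c ≠ 0 ∧ p = C c := by
  obtain ⟨q, hq⟩ := hp.exists_right_inv
  obtain ⟨s, p', q', rfl, rfl⟩ := exists_finset_rename₂ p q
  have hinj := rename_injective (R := k) ((↑) : s → V) Subtype.val_injective
  have hpq : p' * q' = 1 := by
    apply hinj
    rw [map_mul, map_one, hq]
  have hp' : IsUnit p' := isUnit_iff_exists_inv.mpr ⟨q', hpq⟩
  let e := Fintype.equivFin s
  have hup : IsUnit (renameEquiv k e p') := hp'.map (renameEquiv k e)
  obtain ⟨c, hc, hcc⟩ := mv_unit_eq_C_fin (Fintype.card s) _ hup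
  have : p' = C c := by
    apply (renameEquiv k e).injective
    rw [hcc]
    simp [renameEquiv_apply, rename_C]
  rw [this, rename_C]
  exact ⟨c, hc, rfl⟩

theorem stmt_9 {k : Type*} [Field k] {V : Type*} {G : Type*} [Group G]
    (φ : G →* (MvPolynomial V k ≃ₐ[k] MvPolynomial V k))
    (hdeg : ∀ (g : G) (p : MvPolynomial V k), (φ g p).totalDegree = p.totalDegree)
    (ψ : G →* (FractionRing (MvPolynomial V k) ≃ₐ[k] FractionRing (MvPolynomial V k)))
    (hcompat : ∀ (g : G) (p : MvPolynomial V k),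
      ψ g (algebraMap (MvPolynomial V k) (FractionRing (MvPolynomial V k)) p) =
        algebraMap (MvPolynomial V k) (FractionRing (MvPolynomial V k)) (φ g p))
    (hchar : ∀ lam : G →* kˣ, lam = 1) :
    ∀ x : FractionRing (MvPolynomial V k),
      (∀ g : G, ψ g x = x) ↔
        ∃ f₁ f₂ : MvPolynomial V k, (∀ g : G, φ g f₁ = f₁) ∧ (∀ g : G, φ g f₂ = f₂) ∧
          f₂ ≠ 0 ∧
          x = algebraMap (MvPolynomial V k) (FractionRing (MvPolynomial V k)) f₁ /
              algebraMap (MvPolynomial V k) (FractionRing (MvPolynomial V k)) f₂ := by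
  classical
  set R := MvPolynomial V k
  set K := FractionRing R
  set F := algebraMap R K with hF
  have hFinj : Function.Injective F := IsFractionRing.injective R K
  letI : GCDMonoid R := UniqueFactorizationMonoid.toGCDMonoid R
  intro x
  constructor
  · -- hard direction
    intro hx
    obtain ⟨a, b, hbmem, hxe⟩ := IsFractionRing.div_surjective (A := R) x
    have hb : b ≠ 0 := nonZeroDivisors.ne_zero hbmem
    obtain ⟨a', b', ha, hbb, hu⟩ := extract_gcd a b
    obtain ⟨d, hdd⟩ : ∃ d, d = gcd a b := ⟨gcd a b, rfl⟩
    rw [← hdd] at ha hbb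
    have hd : d ≠ 0 := fun h => hb (by rw [hbb, h, zero_mul])
    have hb' : b' ≠ 0 := fun h => hb (by rw [hbb, h, mul_zero])
    have hxe' : x = F a' / F b' := by
      rw [← hxe, ha, hbb, map_mul, map_mul, mul_div_mul_left]
      exact fun h => hd (hFinj (by rw [h, map_zero]))
    have hcop : IsRelPrime a' b' := fun e hea heb =>
      isUnit_of_dvd_unit (dvd_gcd hea heb) hu
    have hFb' : F b' ≠ 0 := fun h => hb' (hFinj (by rw [h, map_zero]))
    -- key cross-multiplication identity
    have key : ∀ g : G, φ g a' * b' = a' * φ g b' := by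
      intro g
      have h1 : F (φ g a') / F (φ g b') = F a' / F b' := by
        rw [← hcompat, ← hcompat, ← map_div₀ (ψ g), ← hxe']
        exact hx g
      have hgb' : φ g b' ≠ 0 := fun h => hb' (by
        have := congrArg (φ g).symm h
        simpa using this)
      have hFgb' : F (φ g b') ≠ 0 := fun h => hgb' (hFinj (by rw [h, map_zero]))
      have h2 : F (φ g a') * F b' = F a' * F (φ g b') :=
        (div_eq_div_iff hFgb' hFb').mp h1
      apply hFinj
      rw [map_mul, map_mul]
      exact h2
    -- b' is associated to φ g b'
    have hcopg : ∀ g : G, IsRelPrime (φ g a') (φ g b') := by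
      intro g e he1 he2
      have h1 : (φ g).symm e ∣ a' := by
        have := map_dvd ((φ g).symm : R →+* R) he1
        simpa using this
      have h2 : (φ g).symm e ∣ b' := by
        have := map_dvd ((φ g).symm : R →+* R) he2
        simpa using this
      have := (hcop h1 h2).map ((φ g) : R →+* R)
      simpa using this
    have hassoc : ∀ g : G, ∃ c : kˣ, φ g b' = C (c : k) * b' := by
      intro g
      have hd1 : b' ∣ φ g b' := by
        refine (hcop.symm).dvd_of_dvd_mul_left ?_
        rw [← key g]
        exact dvd_mul_left b' (φ g a')
      have hd2 : φ g b' ∣ b' := by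
        refine ((hcopg g).symm).dvd_of_dvd_mul_left ?_
        rw [key g]
        exact dvd_mul_left (φ g b') a'
      obtain ⟨u, hucc⟩ := associated_of_dvd_dvd hd1 hd2
      obtain ⟨c, hc, hcC⟩ := mv_unit_eq_C (p := (u : R)) u.isUnit
      exact ⟨Units.mk0 c hc, by rw [← hucc, hcC, mul_comm]; rfl⟩
    -- build the character
    have huniq : ∀ (c c' : kˣ), C (c : k) * b' = C (c' : k) * b' → c = c' := by
      intro c c' h
      have := mul_right_cancel₀ hb' h
      exact Units.ext (C_injective V k this)
    let lam : G →* kˣ :=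
      { toFun := fun g => Classical.choose (hassoc g)
        map_one' := by
          apply huniq
          rw [← Classical.choose_spec (hassoc 1)]
          simp
        map_mul' := by
          intro g h
          apply huniq
          rw [← Classical.choose_spec (hassoc (g * h)), map_mul]
          have hh := Classical.choose_spec (hassoc h)
          have hg := Classical.choose_spec (hassoc g)
          conv_lhs => rw [AlgEquiv.mul_apply, hh, map_mul, hg]
          rw [show ((φ g) (C ((Classical.choose (hassoc h) : kˣ) : k)) : R) =
              C ((Classical.choose (hassoc h) : kˣ) : k) from (φ g).commutes' _]
          rw [Units.val_mul, map_mul]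
          ring }
    have hlam := hchar lam
    have hfix : ∀ g : G, φ g b' = b' := by
      intro g
      have h1 : lam g = 1 := by rw [hlam]; rfl
      have h2 := Classical.choose_spec (hassoc g)
      have : Classical.choose (hassoc g) = (1 : kˣ) := h1
      rw [this] at h2
      simpa using h2
    have hfixa : ∀ g : G, φ g a' = a' := by
      intro g
      have := key g
      rw [hfix g] at this
      exact mul_right_cancel₀ hb' this
    exact ⟨a', b', hfixa, hfix, hb', hxe'⟩
  · rintro ⟨f₁, f₂, h1, h2, h2n, rfl⟩ g
    rw [map_div₀ (ψ g), hcompat, hcompat, h1 g, h2 g]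
end

section
/- Let n ≥ 3 and let A₁,…,Aₙ and A'₁,…,A'ₙ be trace-zero 2×2 matrices over ℂ with Tr(AᵢAⱼ) = Tr(A'ᵢA'ⱼ) for all 1 ≤ i ≤ j ≤ n. Then either Tr(AᵢAⱼA_k) = Tr(A'ᵢA'ⱼA'_k) for all i < j < k, or Tr(AᵢAⱼA_k) = -Tr(A'ᵢA'ⱼA'_k) for all i < j < k. -/
open Matrix

private lemma key (A B C D E F : Matrix (Fin 2) (Fin 2) ℂ)
    (hA : A.trace = 0) (hB : B.trace = 0) (hC : C.trace = 0)
    (hD : D.trace = 0) (hE : E.trace = 0) (hF : F.trace = 0) :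
    (A * B * C).trace * (D * E * F).trace =
      -(1/2) * ((A*D).trace * ((B*E).trace * (C*F).trace - (B*F).trace * (C*E).trace)
        - (A*E).trace * ((B*D).trace * (C*F).trace - (B*F).trace * (C*D).trace)
        + (A*F).trace * ((B*D).trace * (C*E).trace - (B*E).trace * (C*D).trace)) := by
  rw [Matrix.trace_fin_two] at hA hB hC hD hE hF
  simp only [Matrix.trace_fin_two, Matrix.mul_apply, Fin.sum_univ_two]
  have ha : A 1 1 = -A 0 0 := by linear_combination hA
  have hb : B 1 1 = -B 0 0 := by linear_combination hB
  have hc : C 1 1 = -C 0 0 := by linear_combination hC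
  have hd : D 1 1 = -D 0 0 := by linear_combination hD
  have he : E 1 1 = -E 0 0 := by linear_combination hE
  have hf : F 1 1 = -F 0 0 := by linear_combination hF
  rw [ha, hb, hc, hd, he, hf]
  ring

theorem stmt_17 (n : ℕ) (hn : 3 ≤ n) (A A' : Fin n → Matrix (Fin 2) (Fin 2) ℂ)
    (hA : ∀ i, (A i).trace = 0) (hA' : ∀ i, (A' i).trace = 0)
    (htr : ∀ i j : Fin n, i ≤ j → (A i * A j).trace = (A' i * A' j).trace) :
    (∀ i j k : Fin n, i < j → j < k →
        (A i * A j * A k).trace = (A' i * A' j * A' k).trace) ∨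
    (∀ i j k : Fin n, i < j → j < k →
        (A i * A j * A k).trace = -(A' i * A' j * A' k).trace) := by
  have htr2 : ∀ i j : Fin n, (A i * A j).trace = (A' i * A' j).trace := by
    intro i j
    rcases le_total i j with h | h
    · exact htr i j h
    · rw [Matrix.trace_mul_comm, Matrix.trace_mul_comm (A' i)]
      exact htr j i h
  have H : ∀ i j k p q r : Fin n,
      (A i * A j * A k).trace * (A p * A q * A r).trace =
      (A' i * A' j * A' k).trace * (A' p * A' q * A' r).trace := by
    intro i j k p q r
    rw [key _ _ _ _ _ _ (hA i) (hA j) (hA k) (hA p) (hA q) (hA r),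
      key _ _ _ _ _ _ (hA' i) (hA' j) (hA' k) (hA' p) (hA' q) (hA' r),
      htr2, htr2, htr2, htr2, htr2, htr2, htr2, htr2, htr2]
  by_cases h : ∀ i j k : Fin n, i < j → j < k →
      (A i * A j * A k).trace = (A' i * A' j * A' k).trace
  · exact Or.inl h
  · right
    push_neg at h
    obtain ⟨a, b, c, _, _, hne⟩ := h
    have hsq := H a b c a b c
    have hneg : (A a * A b * A c).trace = -(A' a * A' b * A' c).trace := by
      have : ((A a * A b * A c).trace - (A' a * A' b * A' c).trace) *
          ((A a * A b * A c).trace + (A' a * A' b * A' c).trace) = 0 := by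
        linear_combination hsq
      rcases mul_eq_zero.mp this with h0 | h0
      · exact absurd (by linear_combination h0) hne
      · linear_combination h0
    have hz : (A a * A b * A c).trace ≠ 0 := by
      intro h0
      apply hne
      rw [h0] at hneg ⊢
      linear_combination -hneg
    intro i j k _ _
    have := H a b c i j k
    rw [hneg] at this
    field_simp at this ⊢
    have hz' : (A' a * A' b * A' c).trace ≠ 0 := by
      intro h0; apply hz; rw [hneg, h0, neg_zero]
    exact mul_left_cancel₀ (neg_ne_zero.mpr hz') (by linear_combination this)
end
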